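/- In a singly linked list component that is a simple path n0 → n1 → … → n_{k−1} where the only special nodes are those pointed to by variables plus endpoints of back edges, Abstract-SLL applied to a pure path whose ordinary nodes form contiguous segments yields a component whose node count equals the number of special nodes plus the number of maximal nonempty contiguous segments of ordinary nodes (each segment collapsing to one node with a self-edge). -/

import Mathlib

/-- Layout attribute of a heap component. -/
inductive Layout where
  | SLL | T | C | DAG
deriving DecidableEq

/-- An edge is either a variable edge `(v, n)` or a node edge `(n, n')`. -/
abbrev Edge (Var Node : Type) := (Var × Node) ⊕ (Node × Node)

/-- An abstract component `(V, N, P)` with a layout attribute. -/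
structure AComp (Var Node : Type) where
  layout : Layout
  V : Set Var
  N : Set Node
  P : Set (Edge Var Node)

variable {Var Node : Type}

/-- `(fN, fP)` witnesses that `C'` is a valid abstraction of `C`:
both maps are onto, and the `fP`-preimage of every edge of `C'` consists only of
edges of `C` whose endpoints are mapped by `fN` to the corresponding endpoints. -/
def IsWitness (C' C : AComp Var Node) (fN : Node → Node)
    (fP : Edge Var Node → Edge Var Node) : Prop :=
  (∀ n ∈ C.N, fN n ∈ C'.N) ∧
  (∀ n' ∈ C'.N, ∃ n ∈ C.N, fN n = n') ∧
  (∀ e ∈ C.P, fP e ∈ C'.P) ∧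
  (∀ e' ∈ C'.P, ∃ e ∈ C.P, fP e = e') ∧
  (∀ v n', Sum.inl (v, n') ∈ C'.P →
    ∀ e ∈ C.P, fP e = Sum.inl (v, n') → ∃ n, e = Sum.inl (v, n) ∧ fN n = n') ∧
  (∀ a' b', Sum.inr (a', b') ∈ C'.P →
    ∀ e ∈ C.P, fP e = Sum.inr (a', b') → ∃ a b, e = Sum.inr (a, b) ∧ fN a = a' ∧ fN b = b')

/-- `C'` is a valid abstraction of `C`. -/
def ValidAbs (C' C : AComp Var Node) : Prop :=
  C'.layout = C.layout ∧ C'.V = C.V ∧ ∃ fN fP, IsWitness C' C fN fP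

variable [DecidableEq Node]

/-- The node map merging `b` into `a`. -/
def collapseN (a b : Node) : Node → Node := fun n => if n = b then a else n

/-- The edge map redirecting edges incident to `b` to `a`. -/
def collapseE (a b : Node) : Edge Var Node → Edge Var Node
  | Sum.inl (v, n) => Sum.inl (v, collapseN a b n)
  | Sum.inr (x, y) => Sum.inr (collapseN a b x, collapseN a b y)

/-- A node of an SLL component is special if a variable points to it or it
contributes to a back edge (an edge `(a, b)` with `depth a > depth b`). -/
def SpecialSLL (C : AComp Var Node) (depth : Node → ℕ) (n : Node) : Prop :=
  (∃ v, Sum.inl (v, n) ∈ C.P) ∨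
  (∃ a b, Sum.inr (a, b) ∈ C.P ∧ depth b < depth a ∧ (n = a ∨ n = b))

/-- One iteration of the while loop of Abstract-SLL on the state `(C, M)`:
pick distinct `a, b ∈ M` with `(a, b) ∈ P`, merge `b` into `a` (removing `b`,
redirecting its edges and adding the self-edge `(a, a)`) and remove `b`
from `M`. -/
def MergeStep : AComp Var Node × Set Node → AComp Var Node × Set Node → Prop :=
  fun s s' => ∃ a b, a ∈ s.2 ∧ b ∈ s.2 ∧ a ≠ b ∧ Sum.inr (a, b) ∈ s.1.P ∧
    s' = (⟨s.1.layout, s.1.V, s.1.N \ {b}, collapseE a b '' s.1.P⟩, s.2 \ {b})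

/-- A completed run of Abstract-SLL: finitely many merge steps after which no
mergeable pair remains. -/
def SLLRun (C : AComp Var Node) (depth : Node → ℕ)
    (C' : AComp Var Node) : Prop :=
  ∃ M' : Set Node,
    Relation.ReflTransGen MergeStep
      (C, {n | n ∈ C.N ∧ ¬ SpecialSLL C depth n}) (C', M') ∧
    ¬ ∃ a b, a ∈ M' ∧ b ∈ M' ∧ a ≠ b ∧ Sum.inr (a, b) ∈ C'.P


open Classical in
noncomputable def lead (D : ℕ → Prop) : ℕ → ℕ
  | 0 => 0
  | t+1 => if D (t+1) then lead D t else t+1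

lemma lead_le (D : ℕ → Prop) : ∀ t, lead D t ≤ t
  | 0 => le_refl _
  | t+1 => by
      rw [lead]; split
      · exact (lead_le D t).trans (Nat.le_succ t)
      · exact le_refl _

lemma lead_notMem (D : ℕ → Prop) (h0 : ¬ D 0) : ∀ t, ¬ D (lead D t)
  | 0 => h0
  | t+1 => by
      rw [lead]; split
      · exact lead_notMem D h0 t
      · assumption

lemma lead_eq_self (D : ℕ → Prop) {t : ℕ} (h : ¬ D t) : lead D t = t := by
  cases t with
  | zero => rfl
  | succ t => rw [lead, if_neg h]

lemma lead_mem_of_lt (D : ℕ → Prop) : ∀ t j, lead D t < j → j ≤ t → D j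
  | 0, j, h1, h2 => by simp [lead] at h1; omega
  | t+1, j, h1, h2 => by
      rw [lead] at h1; split at h1
      · rcases Nat.lt_or_ge j (t+1) with h | h
        · exact lead_mem_of_lt D t j h1 (by omega)
        · have hj : j = t+1 := by omega
          subst hj; assumption
      · omega

lemma lead_empty : ∀ t, lead (fun _ => False) t = t
  | 0 => rfl
  | t+1 => by rw [lead, if_neg (fun h => h)]

lemma lead_update (D : ℕ → Prop) (t : ℕ) (ht : ¬ D (t+1)) :
    ∀ u, lead (fun j => D j ∨ j = t + 1) u =
      if lead D u = t + 1 then lead D t else lead D u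
  | 0 => by simp [lead]
  | u+1 => by
      have IH := lead_update D t ht u
      simp only [lead.eq_2 (fun j => D j ∨ j = t + 1) u]
      rw [lead.eq_2 D u]
      by_cases h1 : D (u+1) ∨ u+1 = t+1
      · rw [if_pos h1]
        rcases h1 with h1 | h1
        · rw [if_pos h1, IH]
        · have hu : u = t := by omega
          subst hu
          rw [if_neg ht, if_pos rfl, IH, if_neg (by have := lead_le D u; omega)]
      · push_neg at h1
        rw [if_neg (by tauto), if_neg h1.1, if_neg h1.2]

/-- `n` extended to `ℕ`. -/
noncomputable def nn {k : ℕ} (hk : 0 < k) (n : Fin k → Node) (t : ℕ) : Node :=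
  if h : t < k then n ⟨t, h⟩ else n ⟨0, hk⟩

omit [DecidableEq Node] in
lemma nn_lt {k : ℕ} (hk : 0 < k) (n : Fin k → Node) {t : ℕ} (h : t < k) :
    nn hk n t = n ⟨t, h⟩ := dif_pos h

omit [DecidableEq Node] in
lemma nn_fin {k : ℕ} (hk : 0 < k) (n : Fin k → Node) (i : Fin k) :
    nn hk n i.val = n i := by rw [nn_lt hk n i.isLt]

omit [DecidableEq Node] in
lemma nn_inj {k : ℕ} (hk : 0 < k) {n : Fin k → Node} (hinj : Function.Injective n)
    {i j : ℕ} (hi : i < k) (hj : j < k) (h : nn hk n i = nn hk n j) : i = j := by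
  rw [nn_lt hk n hi, nn_lt hk n hj] at h
  simpa using congrArg Fin.val (hinj h)

/-- Invariant for the Abstract-SLL run on a path. -/
def PathInv {k : ℕ} (hk : 0 < k) (n : Fin k → Node) (C : AComp Var Node)
    (depth : Node → ℕ) (s : AComp Var Node × Set Node) (D : ℕ → Prop) : Prop :=
  (∀ i, D i → i < k ∧ 0 < i ∧ ¬ SpecialSLL C depth (nn hk n i) ∧
      ¬ SpecialSLL C depth (nn hk n (i - 1))) ∧
  s.1.N = {x | ∃ i : Fin k, x = n i ∧ ¬ D i.val} ∧
  s.2 = {x | ∃ i : Fin k, x = n i ∧ ¬ SpecialSLL C depth (n i) ∧ ¬ D i.val} ∧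
  s.1.P = {e | (∃ v x, e = Sum.inl (v, x)) ∧ e ∈ C.P} ∪
    {e | ∃ t, t + 1 < k ∧
      e = Sum.inr (nn hk n (lead D t), nn hk n (lead D (t + 1)))}

lemma inv_step {k : ℕ} (hk : 0 < k) {n : Fin k → Node}
    (hinj : Function.Injective n) {C : AComp Var Node} (depth : Node → ℕ)
    {s s' : AComp Var Node × Set Node} {D : ℕ → Prop}
    (hI : PathInv hk n C depth s D) (hs : MergeStep s s') :
    ∃ D', PathInv hk n C depth s' D' := by
  obtain ⟨hD, hNc, hMc, hPc⟩ := hI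
  obtain ⟨a, b, haM, hbM, hab, habP, rfl⟩ := hs
  have hD0 : ¬ D 0 := fun h => by have := (hD 0 h).2.1; omega
  rw [hPc] at habP
  rcases habP with ⟨⟨v, x, he⟩, -⟩ | ⟨t, ht, he⟩
  · exact absurd he (by simp)
  obtain ⟨ha, hb⟩ : a = nn hk n (lead D t) ∧ b = nn hk n (lead D (t+1)) := by
    injection he with h'; injection h' with h1 h2; exact ⟨h1, h2⟩
  have hltk : lead D t < k := lt_of_le_of_lt (lead_le D t) (by omega)
  have hl1k : lead D (t+1) < k := lt_of_le_of_lt (lead_le D (t+1)) ht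
  have hDt1 : ¬ D (t + 1) := by
    intro h
    apply hab
    rw [ha, hb, lead, if_pos h]
  have hlead1 : lead D (t+1) = t + 1 := by rw [lead, if_neg hDt1]
  rw [hMc] at haM hbM
  obtain ⟨ia, hia, hoa, hda⟩ := haM
  obtain ⟨ib, hib, hob, hdb⟩ := hbM
  have hiav : (ia : ℕ) = lead D t := by
    apply nn_inj hk hinj ia.isLt hltk
    rw [nn_fin, ← hia, ha]
  have hibv : (ib : ℕ) = t + 1 := by
    rw [← hlead1]
    apply nn_inj hk hinj ib.isLt hl1k
    rw [nn_fin, ← hib, hb, hlead1]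
  have hOlt : ¬ SpecialSLL C depth (nn hk n (lead D t)) := by
    rw [nn_lt hk n hltk]
    have : ia = ⟨lead D t, hltk⟩ := Fin.ext hiav
    rwa [this] at hoa
  have hOt1 : ¬ SpecialSLL C depth (nn hk n (t + 1)) := by
    rw [nn_lt hk n ht]
    have : ib = ⟨t + 1, ht⟩ := Fin.ext hibv
    rwa [this] at hob
  have hOt : ¬ SpecialSLL C depth (nn hk n t) := by
    rcases eq_or_lt_of_le (lead_le D t) with h | h
    · rwa [h] at hOlt
    · have htD : D t := lead_mem_of_lt D t t h (le_refl _)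
      exact (hD t htD).2.2.1
  have hbnn : b = nn hk n (t + 1) := by rw [hb, hlead1]
  refine ⟨fun j => D j ∨ j = t + 1, ?_, ?_, ?_, ?_⟩
  · rintro i (hi | rfl)
    · exact hD i hi
    · exact ⟨ht, Nat.succ_pos t, hOt1, by simpa using hOt⟩
  · show s.1.N \ {b} = _
    rw [hNc]
    ext x
    simp only [Set.mem_diff, Set.mem_setOf_eq, Set.mem_singleton_iff]
    constructor
    · rintro ⟨⟨i, rfl, hi⟩, hxb⟩
      refine ⟨i, rfl, ?_⟩
      rintro (h | h)
      · exact hi h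
      · apply hxb
        rw [hbnn, ← h, nn_fin]
    · rintro ⟨i, rfl, hi⟩
      refine ⟨⟨i, rfl, fun h => hi (Or.inl h)⟩, ?_⟩
      intro hxb
      apply hi
      right
      rw [hbnn] at hxb
      exact nn_inj hk hinj i.isLt ht (by rw [nn_fin]; exact hxb)
  · show s.2 \ {b} = _
    rw [hMc]
    ext x
    simp only [Set.mem_diff, Set.mem_setOf_eq, Set.mem_singleton_iff]
    constructor
    · rintro ⟨⟨i, rfl, ho, hi⟩, hxb⟩
      refine ⟨i, rfl, ho, ?_⟩
      rintro (h | h)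
      · exact hi h
      · exact hxb (by rw [hbnn, ← h, nn_fin])
    · rintro ⟨i, rfl, ho, hi⟩
      refine ⟨⟨i, rfl, ho, fun h => hi (Or.inl h)⟩, ?_⟩
      intro hxb
      apply hi
      right
      rw [hbnn] at hxb
      exact nn_inj hk hinj i.isLt ht (by rw [nn_fin]; exact hxb)
  · show collapseE a b '' s.1.P = _
    have hkey : ∀ u, u < k →
        collapseN a b (nn hk n (lead D u)) =
          nn hk n (lead (fun j => D j ∨ j = t + 1) u) := by
      intro u hu
      rw [lead_update D t hDt1 u]
      by_cases h : lead D u = t + 1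
      · rw [if_pos h, h, ← hbnn]
        rw [show collapseN a b b = a from by simp [collapseN], ha]
      · rw [if_neg h]
        have hne : nn hk n (lead D u) ≠ b := by
          intro hcon
          apply h
          rw [hbnn] at hcon
          exact nn_inj hk hinj (lt_of_le_of_lt (lead_le D u) hu) ht hcon
        simp [collapseN, hne]
    rw [hPc, Set.image_union]
    congr 1
    · ext e
      simp only [Set.mem_image, Set.mem_setOf_eq]
      constructor
      · rintro ⟨e0, ⟨⟨v, x, rfl⟩, hmem⟩, rfl⟩
        have hxb : x ≠ b := by
          intro h
          apply hOt1
          rw [← hbnn, ← h]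
          exact Or.inl ⟨v, hmem⟩
        rw [collapseE, collapseN]
        simp only [if_neg hxb]
        exact ⟨⟨v, x, rfl⟩, hmem⟩
      · rintro ⟨⟨v, x, rfl⟩, hmem⟩
        have hxb : x ≠ b := by
          intro h
          apply hOt1
          rw [← hbnn, ← h]
          exact Or.inl ⟨v, hmem⟩
        exact ⟨Sum.inl (v, x), ⟨⟨v, x, rfl⟩, hmem⟩, by
          rw [collapseE, collapseN]; simp only [if_neg hxb]⟩
    · ext e
      simp only [Set.mem_image, Set.mem_setOf_eq]
      constructor
      · rintro ⟨e0, ⟨u, hu, rfl⟩, rfl⟩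
        exact ⟨u, hu, by rw [collapseE, hkey u (by omega), hkey (u+1) hu]⟩
      · rintro ⟨u, hu, rfl⟩
        exact ⟨Sum.inr (nn hk n (lead D u), nn hk n (lead D (u+1))), ⟨u, hu, rfl⟩,
          by rw [collapseE, hkey u (by omega), hkey (u+1) hu]⟩

/-- on a pure path `n 0 → n 1 → … → n (k-1)` (so there are no
back edges and the special nodes are exactly the variable-pointed ones),
Abstract-SLL yields a component whose number of nodes equals the number of
special nodes plus the number of maximal nonempty contiguous segments of
ordinary nodes (each such segment collapsing to one node with a self-edge). -/
theorem abstractSLL_path_count (k : ℕ) (hk : 0 < k) (n : Fin k → Node)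
    (hinj : Function.Injective n) (C : AComp Var Node)
    (hlay : C.layout = Layout.SLL) (hN : C.N = Set.range n)
    (hP : ∀ x y : Node, Sum.inr (x, y) ∈ C.P ↔
      ∃ i : Fin k, ∃ h : i.val + 1 < k, x = n i ∧ y = n ⟨i.val + 1, h⟩)
    (depth : Node → ℕ) (hdepth : ∀ i : Fin k, depth (n i) = i.val)
    (C' : AComp Var Node) (hrun : SLLRun C depth C') :
    C'.N.ncard =
      {i : Fin k | SpecialSLL C depth (n i)}.ncard +
      {i : Fin k | ¬ SpecialSLL C depth (n i) ∧
        (i.val = 0 ∨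
          SpecialSLL C depth (n ⟨i.val - 1, by omega⟩))}.ncard := by
  classical
  obtain ⟨M', hrt, hstop⟩ := hrun
  have hbase : PathInv hk n C depth
      (C, {x | x ∈ C.N ∧ ¬ SpecialSLL C depth x}) (fun _ => False) := by
    refine ⟨by simp, ?_, ?_, ?_⟩
    · show C.N = _
      rw [hN]
      ext x
      simp only [Set.mem_range, Set.mem_setOf_eq, not_false_iff, and_true]
      exact ⟨fun ⟨i, h⟩ => ⟨i, h.symm⟩, fun ⟨i, h⟩ => ⟨i, h.symm⟩⟩
    · show {x | x ∈ C.N ∧ ¬ SpecialSLL C depth x} = _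
      ext x
      simp only [Set.mem_setOf_eq, not_false_iff, and_true]
      constructor
      · rintro ⟨hx, hs⟩
        rw [hN] at hx
        obtain ⟨i, rfl⟩ := hx
        exact ⟨i, rfl, hs⟩
      · rintro ⟨i, rfl, hs⟩
        exact ⟨by rw [hN]; exact ⟨i, rfl⟩, hs⟩
    · show C.P = _
      ext e
      cases e with
      | inl p =>
        simp only [Set.mem_union, Set.mem_setOf_eq]
        constructor
        · intro h
          exact Or.inl ⟨⟨p.1, p.2, rfl⟩, h⟩
        · rintro (⟨-, h⟩ | ⟨t, ht, h⟩)
          · exact h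
          · exact absurd h (by simp)
      | inr p =>
        obtain ⟨x, y⟩ := p
        simp only [Set.mem_union, Set.mem_setOf_eq]
        rw [hP x y]
        constructor
        · rintro ⟨i, h, rfl, rfl⟩
          right
          refine ⟨i.val, h, ?_⟩
          rw [lead_empty, lead_empty, nn_fin, nn_lt hk n h]
        · rintro (⟨⟨v, z, h⟩, -⟩ | ⟨t, ht, h⟩)
          · exact absurd h (by simp)
          · rw [lead_empty, lead_empty] at h
            injection h with h'
            injection h' with h1 h2
            exact ⟨⟨t, by omega⟩, ht, by rw [h1, nn_lt hk n (by omega)],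
              by rw [h2, nn_lt hk n ht]⟩
  have main : ∀ p q, Relation.ReflTransGen MergeStep p q →
      (∃ D, PathInv hk n C depth p D) → ∃ D, PathInv hk n C depth q D := by
    intro p q h
    induction h with
    | refl => exact id
    | tail _ hstep ih =>
      intro hp
      obtain ⟨D1, hD1⟩ := ih hp
      exact inv_step hk hinj depth hD1 hstep
  obtain ⟨D, hD, hNc0, hMc0, hPc0⟩ := main _ _ hrt ⟨_, hbase⟩
  have hNc : C'.N = {x | ∃ i : Fin k, x = n i ∧ ¬ D i.val} := hNc0
  have hMc : M' = {x | ∃ i : Fin k, x = n i ∧ ¬ SpecialSLL C depth (n i) ∧ ¬ D i.val} := hMc0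
  have hPc : C'.P = {e | (∃ v x, e = Sum.inl (v, x)) ∧ e ∈ C.P} ∪
      {e | ∃ t, t + 1 < k ∧
        e = Sum.inr (nn hk n (lead D t), nn hk n (lead D (t + 1)))} := hPc0
  have hD0 : ¬ D 0 := fun h => by have := (hD 0 h).2.1; omega
  set S : Set (Fin k) := {i : Fin k | SpecialSLL C depth (n i)} with hSdef
  set G : Set (Fin k) := {i : Fin k | ¬ SpecialSLL C depth (n i) ∧
      (i.val = 0 ∨ SpecialSLL C depth (n ⟨i.val - 1, by omega⟩))} with hGdef
  have hUS : {i : Fin k | ¬ D i.val} = S ∪ G := by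
    ext i
    simp only [Set.mem_setOf_eq, Set.mem_union, hSdef, hGdef]
    constructor
    · intro hiD
      by_cases hs : SpecialSLL C depth (n i)
      · exact Or.inl hs
      · right
        refine ⟨hs, ?_⟩
        by_contra hcon
        push_neg at hcon
        obtain ⟨h0, hs1⟩ := hcon
        have hti : (i.val - 1) + 1 = i.val := by omega
        have htk : (i.val - 1) + 1 < k := by rw [hti]; exact i.isLt
        have hltk : lead D (i.val - 1) < k := by
          have := lead_le D (i.val - 1); omega
        have hOlt : ¬ SpecialSLL C depth (n ⟨lead D (i.val - 1), hltk⟩) := by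
          rcases eq_or_lt_of_le (lead_le D (i.val - 1)) with h | h
          · have : (⟨lead D (i.val - 1), hltk⟩ : Fin k) = ⟨i.val - 1, by omega⟩ :=
              Fin.ext h
            rw [this]
            exact hs1
          · have hmem : D (lead D (i.val - 1) + 1) :=
              lead_mem_of_lt D (i.val - 1) (lead D (i.val - 1) + 1) (by omega) (by omega)
            have h2 := (hD _ hmem).2.2.2
            simpa [nn_lt hk n hltk] using h2
        apply hstop
        refine ⟨n ⟨lead D (i.val - 1), hltk⟩, n i, ?_, ?_, ?_, ?_⟩
        · rw [hMc]
          exact ⟨⟨lead D (i.val - 1), hltk⟩, rfl, hOlt, lead_notMem D hD0 _⟩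
        · rw [hMc]
          exact ⟨i, rfl, hs, hiD⟩
        · intro hcon2
          have h3 : lead D (i.val - 1) = i.val := congrArg Fin.val (hinj hcon2)
          have := lead_le D (i.val - 1)
          omega
        · rw [hPc]
          right
          refine ⟨i.val - 1, htk, ?_⟩
          have hl1 : lead D ((i.val - 1) + 1) = (i.val - 1) + 1 :=
            lead_eq_self D (by rw [hti]; exact hiD)
          rw [hl1, nn_lt hk n hltk, nn_lt hk n htk]
          have : (⟨(i.val - 1) + 1, htk⟩ : Fin k) = i := Fin.ext hti
          rw [this]
    · rintro (hs | ⟨ho, hcase⟩)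
      · intro hDi
        have := (hD i.val hDi).2.2.1
        rw [nn_fin] at this
        exact this hs
      · intro hDi
        obtain ⟨-, hpos, -, hprev⟩ := hD i.val hDi
        rcases hcase with h0 | hs1
        · omega
        · apply hprev
          rwa [nn_lt hk n (show i.val - 1 < k by omega)]
  have hdisj : Disjoint S G := Set.disjoint_left.mpr (fun i hi hg => hg.1 hi)
  have hC'N : C'.N = n '' {i : Fin k | ¬ D i.val} := by
    rw [hNc]
    ext x
    simp only [Set.mem_image, Set.mem_setOf_eq]
    exact ⟨fun ⟨i, h1, h2⟩ => ⟨i, h2, h1.symm⟩, fun ⟨i, h1, h2⟩ => ⟨i, h2.symm, h1⟩⟩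
  rw [hC'N, Set.ncard_image_of_injective _ hinj, hUS,
    Set.ncard_union_eq hdisj (Set.toFinite _) (Set.toFinite _)]
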